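/- Let (w_1,...,w_n) be a minimal lace diagram for (e_0,...,e_n). Then for all i with 1 <= i <= n-1 and all j with 1 <= j < e_i, it is impossible that both w_i(j) > w_i(j+1) and w_{i+1}^{-1}(j) > w_{i+1}^{-1}(j+1) hold. -/

import Mathlib

open MvPolynomial

/-! Common setup.  Dots in columns, positions in permutations, and variable
indices are all 0-indexed: dot `q` (0-indexed) of column `i` is dot `q+1`
(1-indexed) in the paper, the variable `(i, j) : ℕ × ℕ` is the Chern root
`x^i_{j+1}`, and in the Schubert variable type `ℕ ⊕ ℕ`, `Sum.inl a` is
`x_{a+1}` and `Sum.inr b` is `y_{b+1}`. -/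

/-- Coxeter length = number of inversions of a (finitely supported) permutation of ℕ. -/
noncomputable def ell (w : Equiv.Perm ℕ) : ℕ :=
  {p : ℕ × ℕ | p.1 < p.2 ∧ w p.2 < w p.1}.ncard

/-- A finitely supported permutation of ℕ. -/
def FinSupp (w : Equiv.Perm ℕ) : Prop := {x | w x ≠ x}.Finite

/-- A lace diagram for the dimension vector `e 0, …, e n`, encoded as a sequence
`w 1, …, w n` of finitely supported permutations of ℕ (normalized so that
`w i = 1` outside `1 ≤ i ≤ n`): all descent positions of `w i` are `< e i` and
all descent positions of `(w i)⁻¹` are `< e (i-1)` (0-indexed positions). -/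
def IsLace (n : ℕ) (e : ℕ → ℕ) (w : ℕ → Equiv.Perm ℕ) : Prop :=
  (∀ i, i = 0 ∨ n < i → w i = 1) ∧
  ∀ i, 1 ≤ i → i ≤ n → FinSupp (w i) ∧
    (∀ k, w i (k + 1) < w i k → k < e i) ∧
    (∀ k, (w i)⁻¹ (k + 1) < (w i)⁻¹ k → k < e (i - 1))

/-- `chain w i k p = (w k)⁻¹ (⋯ ((w (i+1))⁻¹ p))` for `k ≥ i`, and `p` for `k ≤ i`. -/
def chain (w : ℕ → Equiv.Perm ℕ) (i : ℕ) : ℕ → ℕ → ℕ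
  | 0, p => p
  | k + 1, p => if k + 1 ≤ i then p else (w (k + 1))⁻¹ (chain w i k p)

/-- The rank conditions of a lace diagram: `rank e w i j` is the number of dots
`p < e i` of column `i` whose strand continues through column `j`. -/
noncomputable def rank (e : ℕ → ℕ) (w : ℕ → Equiv.Perm ℕ) (i j : ℕ) : ℕ :=
  {p : ℕ | p < e i ∧ ∀ k, i < k → k ≤ j → chain w i k p < e k}.ncard

/-- The lace diagram `w` has rank conditions `r` (for `0 ≤ i ≤ j ≤ n`). -/
def RankEq (n : ℕ) (e : ℕ → ℕ) (w : ℕ → Equiv.Perm ℕ) (r : ℕ → ℕ → ℕ) : Prop :=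
  ∀ i j, i ≤ j → j ≤ n → rank e w i j = r i j

/-- The length of a lace diagram. -/
noncomputable def diagLength (n : ℕ) (w : ℕ → Equiv.Perm ℕ) : ℕ :=
  ∑ i ∈ Finset.Icc 1 n, ell (w i)

/-- The expected codimension `d(r)`. -/
def codim (n : ℕ) (r : ℕ → ℕ → ℕ) : ℕ :=
  ∑ i ∈ Finset.range (n + 1), ∑ j ∈ Finset.range (n + 1),
    if i < j then (r i (j - 1) - r i j) * (r (i + 1) j - r i j) else 0

/-- A minimal lace diagram: its length equals the expected codimension of its
rank conditions. -/
def IsMinimal (n : ℕ) (e : ℕ → ℕ) (w : ℕ → Equiv.Perm ℕ) : Prop :=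
  IsLace n e w ∧ diagLength n w = codim n (rank e w)

/-- The longest element of `S m` (0-indexed), as a permutation of ℕ. -/
def longest (m : ℕ) : Equiv.Perm ℕ where
  toFun i := if i < m then m - 1 - i else i
  invFun i := if i < m then m - 1 - i else i
  left_inv i := by dsimp only; split_ifs <;> omega
  right_inv i := by dsimp only; split_ifs <;> omega

/-- Interchanging the x-variables `x (i+1)` and `x (i+2)` (0-indexed: `inl i`
and `inl (i+1)`). -/
noncomputable def sX (i : ℕ) (f : MvPolynomial (ℕ ⊕ ℕ) ℤ) : MvPolynomial (ℕ ⊕ ℕ) ℤ :=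
  rename (Sum.map (Equiv.swap i (i + 1)) id) f

/-- `S` is the family of double Schubert polynomials `S w = 𝔖_w(x; y)`:
it takes the prescribed product value on each longest element, it satisfies the
divided difference recursion `(x i - x (i+1)) * S (w * s i) = S w - (S w)^{s i}`
when `w` has a descent at `i` and `(S w)^{s i} = S w` otherwise, and only the
variables up to the last descents of `w` and `w⁻¹` occur in `S w`. -/
def IsSchubertFamily (S : Equiv.Perm ℕ → MvPolynomial (ℕ ⊕ ℕ) ℤ) : Prop :=
  (∀ m : ℕ, S (longest m) =
      ∏ i ∈ Finset.range m, ∏ j ∈ Finset.range m,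
        if i + j + 2 ≤ m then X (Sum.inl i) - X (Sum.inr j) else 1) ∧
  (∀ w : Equiv.Perm ℕ, FinSupp w → ∀ i : ℕ,
    (w (i + 1) < w i →
      (X (Sum.inl i) - X (Sum.inl (i + 1))) * S (w * Equiv.swap i (i + 1)) =
        S w - sX i (S w)) ∧
    (w i < w (i + 1) → sX i (S w) = S w)) ∧
  (∀ w : Equiv.Perm ℕ, FinSupp w → ∀ k l : ℕ,
    (∀ t, k ≤ t → ¬w (t + 1) < w t) → (∀ t, l ≤ t → ¬w⁻¹ (t + 1) < w⁻¹ t) →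
    ∀ v ∈ (S w).vars, (∃ a < k, v = Sum.inl a) ∨ (∃ b < l, v = Sum.inr b))

/-- The product `S(w) = 𝔖_{w 1}(x^1;x^0) ⋯ 𝔖_{w n}(x^n;x^{n-1})`, in the
variables `(i, j) = x^i_{j+1}`. -/
noncomputable def Sprod (n : ℕ) (S : Equiv.Perm ℕ → MvPolynomial (ℕ ⊕ ℕ) ℤ)
    (w : ℕ → Equiv.Perm ℕ) : MvPolynomial (ℕ × ℕ) ℤ :=
  ∏ i ∈ Finset.Icc 1 n,
    rename (Sum.elim (fun a => (i, a)) (fun b => (i - 1, b))) (S (w i))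

/-- The component-formula polynomial `Q_r`: the sum of `Sprod n S w` over all
minimal lace diagrams `w` with rank conditions `r`. -/
noncomputable def Qpoly (n : ℕ) (e : ℕ → ℕ) (r : ℕ → ℕ → ℕ)
    (S : Equiv.Perm ℕ → MvPolynomial (ℕ ⊕ ℕ) ℤ) : MvPolynomial (ℕ × ℕ) ℤ :=
  ∑ᶠ (w : ℕ → Equiv.Perm ℕ) (_ : IsMinimal n e w ∧ RankEq n e w r), Sprod n S w

/-- The shifted permutation `1^k × w`: fixes `0, …, k-1` (0-indexed) and sends
`k + j` to `k + w j`. -/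
def shiftPerm (k : ℕ) (w : Equiv.Perm ℕ) : Equiv.Perm ℕ where
  toFun j := if j < k then j else w (j - k) + k
  invFun j := if j < k then j else w⁻¹ (j - k) + k
  left_inv j := by
    dsimp only
    by_cases h : j < k
    · simp [h]
    · have h1 : ¬ w (j - k) + k < k := by omega
      simp only [if_neg h, if_neg h1, Nat.add_sub_cancel, Equiv.Perm.inv_def, Equiv.symm_apply_apply]
      omega
  right_inv j := by
    dsimp only
    by_cases h : j < k
    · simp [h]
    · have h1 : ¬ w⁻¹ (j - k) + k < k := by omega
      simp only [if_neg h, if_neg h1, Nat.add_sub_cancel, ← Equiv.Perm.mul_apply, mul_inv_cancel,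
        Equiv.Perm.one_apply]
      omega

/-- The lace diagram `(1^k × w 1, …, 1^k × w n)`. -/
def shiftDiag (k : ℕ) (w : ℕ → Equiv.Perm ℕ) : ℕ → Equiv.Perm ℕ :=
  fun i => shiftPerm k (w i)

/-- The transformation of lace diagrams, allowed at `(i, j)` (0-indexed `j`,
so `j + 1 < e i`) when exactly one of the two descent conditions holds; it
replaces `w i` by `w i * s j` and `w (i+1)` by `s j * w (i+1)`. -/
def TransStep (n : ℕ) (e : ℕ → ℕ) (w w' : ℕ → Equiv.Perm ℕ) : Prop :=
  IsLace n e w ∧ ∃ i j, 1 ≤ i ∧ i + 1 ≤ n ∧ j + 1 < e i ∧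
    Xor' (w i (j + 1) < w i j) ((w (i + 1))⁻¹ (j + 1) < (w (i + 1))⁻¹ j) ∧
    w' = Function.update (Function.update w i (w i * Equiv.swap j (j + 1))) (i + 1)
          (Equiv.swap j (j + 1) * w (i + 1))

/-- The column where the strand through dot `q` of column `c` starts. -/
def startCol (e : ℕ → ℕ) (w : ℕ → Equiv.Perm ℕ) : ℕ → ℕ → ℕ
  | 0, _ => 0
  | c + 1, q => if w (c + 1) q < e c then startCol e w c (w (c + 1) q) else c + 1

/-- The starting dot `(column, position)` of the strand through dot `q` of column `c`. -/
def startDot (e : ℕ → ℕ) (w : ℕ → Equiv.Perm ℕ) : ℕ → ℕ → ℕ × ℕ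
  | 0, q => (0, q)
  | c + 1, q => if w (c + 1) q < e c then startDot e w c (w (c + 1) q) else (c + 1, q)

def endColAux (e : ℕ → ℕ) (w : ℕ → Equiv.Perm ℕ) : ℕ → ℕ → ℕ → ℕ
  | 0, c, _ => c
  | f + 1, c, q =>
      if (w (c + 1))⁻¹ q < e (c + 1) then endColAux e w f (c + 1) ((w (c + 1))⁻¹ q) else c

/-- The column where the strand through dot `q` of column `c` terminates. -/
def endCol (n : ℕ) (e : ℕ → ℕ) (w : ℕ → Equiv.Perm ℕ) (c q : ℕ) : ℕ :=
  endColAux e w (n - c) c q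

/-- `w` is the left-most lace diagram (for its rank conditions): it is a lace
diagram such that in every column the strands are sorted from top to bottom by
starting column (ascending) and then by terminating column (descending), exactly
as produced by the construction which adds, for `i = 0, …, n` and `j = n, …, i`,
all strands from column `i` to column `j` to the bottom of the diagram; and
strands with the same start and end do not cross. -/
def IsLeftmost (n : ℕ) (e : ℕ → ℕ) (w : ℕ → Equiv.Perm ℕ) : Prop :=
  IsLace n e w ∧
  (∀ c, c ≤ n → ∀ q q', q < q' → q' < e c →
    startCol e w c q < startCol e w c q' ∨
      (startCol e w c q = startCol e w c q' ∧ endCol n e w c q' ≤ endCol n e w c q)) ∧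
  (∀ c, 1 ≤ c → c ≤ n → ∀ q q', q < q' → q' < e c →
    startCol e w c q = startCol e w c q' → endCol n e w c q = endCol n e w c q' →
    w c q < w c q')

/-- The substitution homomorphism `φ_u` of a lace diagram `u`: it sends the
variable `x^i_j` to the variable `b_S` of the strand `S` of `u` through dot
`(i, j)`, where the strand variables are realized as the variables indexed by
the starting dots of strands. -/
noncomputable def phiMap (e : ℕ → ℕ) (u : ℕ → Equiv.Perm ℕ) :
    MvPolynomial (ℕ × ℕ) ℤ →ₐ[ℤ] MvPolynomial (ℕ × ℕ) ℤ :=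
  rename fun p => startDot e u p.1 p.2

/-- The product of the simple transpositions `s (i+1)` (1-indexed) for `i` in `l`. -/
def wordProd (l : List ℕ) : Equiv.Perm ℕ := (l.map fun i => Equiv.swap i (i + 1)).prod

/-- A reduced word for a finitely supported permutation of ℕ. -/
def IsReducedWord (u : Equiv.Perm ℕ) (l : List ℕ) : Prop :=
  wordProd l = u ∧ l.length = ell u

/-- Bruhat order: some reduced word for `u` contains a subword which is a
reduced word for `w`. -/
def BruhatLE (w u : Equiv.Perm ℕ) : Prop :=
  ∃ l l', IsReducedWord u l ∧ IsReducedWord w l' ∧ l'.Sublist l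

def InvSet (w : Equiv.Perm ℕ) : Set (ℕ × ℕ) := {p | p.1 < p.2 ∧ w p.2 < w p.1}

lemma mem_InvSet {w : Equiv.Perm ℕ} {a b : ℕ} :
    (a, b) ∈ InvSet w ↔ a < b ∧ w b < w a := Iff.rfl

lemma ell_eq (w : Equiv.Perm ℕ) : ell w = (InvSet w).ncard := rfl

lemma finsupp_bound {w : Equiv.Perm ℕ} (h : FinSupp w) : ∃ N, ∀ x, N ≤ x → w x = x := by
  obtain ⟨N, hN⟩ := h.bddAbove
  exact ⟨N + 1, fun x hx => by
    by_contra hne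
    exact absurd (hN (Set.mem_setOf.2 hne)) (by omega)⟩

lemma fix_lt {w : Equiv.Perm ℕ} {N : ℕ} (hN : ∀ x, N ≤ x → w x = x) :
    ∀ x, x < N → w x < N := by
  intro x hx
  by_contra h
  push_neg at h
  have h2 : w (w x) = w x := hN _ h
  have : w x = x := w.injective h2
  omega

lemma invset_finite {w : Equiv.Perm ℕ} (h : FinSupp w) : (InvSet w).Finite := by
  obtain ⟨N, hN⟩ := finsupp_bound h
  apply Set.Finite.subset ((Set.finite_Iio N).prod (Set.finite_Iio N))
  rintro ⟨a, b⟩ hp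
  obtain ⟨hab, hw⟩ : a < b ∧ w b < w a := hp
  simp only [Set.mem_prod, Set.mem_Iio]
  have hb : b < N := by
    by_contra hbN
    push_neg at hbN
    have hwb : w b = b := hN b hbN
    rcases lt_or_ge a N with ha | ha
    · have := fix_lt hN a ha; omega
    · have := hN a ha; omega
  exact ⟨by omega, hb⟩

lemma finsupp_mul {u v : Equiv.Perm ℕ} (hu : FinSupp u) (hv : FinSupp v) :
    FinSupp (u * v) := by
  apply Set.Finite.subset (hu.union hv)
  intro x hx
  simp only [Set.mem_union, Set.mem_setOf_eq]
  by_contra h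
  push_neg at h
  exact hx (by simp [Equiv.Perm.mul_apply, h.2, h.1])

lemma finsupp_inv {w : Equiv.Perm ℕ} (h : FinSupp w) : FinSupp w⁻¹ := by
  apply Set.Finite.subset h
  intro x hx
  simp only [Set.mem_setOf_eq] at hx ⊢
  intro hwx
  refine hx ?_
  calc w⁻¹ x = w⁻¹ (w x) := by rw [hwx]
  _ = x := by rw [Equiv.Perm.inv_def, Equiv.symm_apply_apply]

lemma finsupp_swap (a b : ℕ) : FinSupp (Equiv.swap a b) := by
  apply Set.Finite.subset ((Set.finite_singleton a).union (Set.finite_singleton b))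
  intro x hx
  simp only [Set.mem_setOf_eq] at hx
  rcases eq_or_ne x a with rfl | h1
  · simp
  rcases eq_or_ne x b with rfl | h2
  · simp
  · exact absurd (Equiv.swap_apply_of_ne_of_ne h1 h2) hx

lemma swap_lt {j a b : ℕ} (hab : a < b) (hne : ¬(a = j ∧ b = j + 1)) :
    Equiv.swap j (j + 1) a < Equiv.swap j (j + 1) b := by
  simp only [Equiv.swap_apply_def]
  split_ifs <;> omega

lemma ell_inv (w : Equiv.Perm ℕ) : ell w⁻¹ = ell w := by
  rw [ell_eq, ell_eq]
  have h : InvSet w⁻¹ = (fun p : ℕ × ℕ => (w p.2, w p.1)) '' InvSet w := by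
    ext ⟨c, d⟩
    constructor
    · intro hp
      obtain ⟨hcd, hw⟩ : c < d ∧ w⁻¹ d < w⁻¹ c := hp
      exact ⟨(w⁻¹ d, w⁻¹ c), ⟨hw, by simpa using hcd⟩, by simp⟩
    · rintro ⟨⟨a, b⟩, hp, heq⟩
      obtain ⟨hab, hw⟩ : a < b ∧ w b < w a := hp
      simp only [Prod.mk.injEq] at heq
      obtain ⟨h1, h2⟩ := heq
      subst h1; subst h2
      exact ⟨hw, by simpa using hab⟩
  rw [h, Set.ncard_image_of_injective]
  intro p q hpq
  simp only [Prod.mk.injEq] at hpq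
  exact Prod.ext (w.injective hpq.2) (w.injective hpq.1)

lemma ell_descent_right {w : Equiv.Perm ℕ} (hw : FinSupp w) {j : ℕ}
    (hd : w (j + 1) < w j) :
    ell (w * Equiv.swap j (j + 1)) + 1 = ell w := by
  set s := Equiv.swap j (j + 1) with hs
  set m : ℕ × ℕ → ℕ × ℕ := fun p => (s p.1, s p.2) with hm
  have hminv : Function.Involutive m := by
    intro p; simp [hm, hs, Equiv.swap_apply_self]
  have hfin : (InvSet (w * s)).Finite := invset_finite (finsupp_mul hw (finsupp_swap _ _))
  have hkey : InvSet w = insert (j, j + 1) (m '' InvSet (w * s)) := by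
    ext ⟨a, b⟩
    constructor
    · intro hp
      obtain ⟨hab, hwv⟩ : a < b ∧ w b < w a := hp
      rcases eq_or_ne (a, b) (j, j + 1) with heq | hne
      · rw [heq]; exact Set.mem_insert _ _
      · refine Set.mem_insert_of_mem _ ⟨(s a, s b), ⟨?_, ?_⟩, ?_⟩
        · refine swap_lt hab ?_
          intro ⟨h1, h2⟩; exact hne (by simp [h1, h2])
        · simpa [hs, Equiv.Perm.mul_apply, Equiv.swap_apply_self] using hwv
        · simp [hm, hs, Equiv.swap_apply_self]
    · rintro (heq | ⟨⟨c, d⟩, hp, heq⟩)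
      · simp only [Prod.mk.injEq] at heq
        obtain ⟨rfl, rfl⟩ := heq
        exact ⟨by omega, hd⟩
      · obtain ⟨hcd, hwv⟩ : c < d ∧ (w * s) d < (w * s) c := hp
        simp only [hm, Prod.mk.injEq] at heq
        obtain ⟨h1, h2⟩ := heq
        subst h1; subst h2
        simp only [Equiv.Perm.mul_apply] at hwv
        have hne : ¬(c = j ∧ d = j + 1) := by
          rintro ⟨rfl, rfl⟩
          rw [hs] at hwv
          simp only [Equiv.swap_apply_left, Equiv.swap_apply_right] at hwv
          omega
        exact ⟨swap_lt hcd hne, hwv⟩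
  have hnotmem : (j, j + 1) ∉ m '' InvSet (w * s) := by
    rintro ⟨⟨c, d⟩, hp, heq⟩
    obtain ⟨hcd, _⟩ : c < d ∧ (w * s) d < (w * s) c := hp
    simp only [hm, hs, Prod.mk.injEq, Equiv.swap_apply_def] at heq
    obtain ⟨h1, h2⟩ := heq
    split_ifs at h1 h2 <;> omega
  rw [ell_eq, ell_eq, hkey, Set.ncard_insert_of_notMem hnotmem (hfin.image m),
    Set.ncard_image_of_injective _ hminv.injective]

lemma ell_descent_left {w : Equiv.Perm ℕ} (hw : FinSupp w) {j : ℕ}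
    (hd : w⁻¹ (j + 1) < w⁻¹ j) :
    ell (Equiv.swap j (j + 1) * w) + 1 = ell w := by
  have h1 : ell (Equiv.swap j (j + 1) * w) = ell (w⁻¹ * Equiv.swap j (j + 1)) := by
    rw [← ell_inv (Equiv.swap j (j + 1) * w), mul_inv_rev, Equiv.swap_inv]
  rw [h1, ell_descent_right (finsupp_inv hw) hd, ell_inv]

def posP (w : ℕ → Equiv.Perm ℕ) : ℕ → Equiv.Perm ℕ
  | 0 => 1
  | k + 1 => (w (k + 1))⁻¹ * posP w k

lemma posP_succ (w : ℕ → Equiv.Perm ℕ) (k : ℕ) (x : ℕ) :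
    posP w (k + 1) x = (w (k + 1))⁻¹ (posP w k x) := rfl

lemma chain_posP (w : ℕ → Equiv.Perm ℕ) (a : ℕ) :
    ∀ k, a ≤ k → ∀ x, chain w a k (posP w a x) = posP w k x := by
  intro k
  induction k with
  | zero =>
    intro h x
    have : a = 0 := Nat.le_zero.mp h
    subst this
    rfl
  | succ m ih =>
    intro h x
    rcases Nat.lt_or_ge m.succ a with hlt | hge
    · omega
    rcases eq_or_lt_of_le h with heq | hlt
    · subst heq
      show (if m + 1 ≤ m + 1 then _ else _) = _
      rw [if_pos le_rfl]
    · have ham : a ≤ m := by omega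
      show (if m + 1 ≤ a then _ else _) = _
      rw [if_neg (by omega), ih ham x, posP_succ]

/-- The set of strands alive at column `k`. -/
def Alv (e : ℕ → ℕ) (w : ℕ → Equiv.Perm ℕ) (k : ℕ) : Set ℕ :=
  {x | posP w k x < e k}

/-- The set of strands alive at all columns in `[a, b]`. -/
def Rset (e : ℕ → ℕ) (w : ℕ → Equiv.Perm ℕ) (a b : ℕ) : Set ℕ :=
  {x | ∀ k, a ≤ k → k ≤ b → posP w k x < e k}

lemma Alv_finite (e : ℕ → ℕ) (w : ℕ → Equiv.Perm ℕ) (k : ℕ) : (Alv e w k).Finite := by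
  have h : Alv e w k = (posP w k) ⁻¹' (Set.Iio (e k)) := rfl
  rw [h]
  exact Set.Finite.preimage ((posP w k).injective.injOn) (Set.finite_Iio _)

lemma Rset_subset_Alv {e : ℕ → ℕ} {w : ℕ → Equiv.Perm ℕ} {a b : ℕ} (hab : a ≤ b) :
    Rset e w a b ⊆ Alv e w a := fun x hx => hx a le_rfl hab

lemma Rset_finite (e : ℕ → ℕ) (w : ℕ → Equiv.Perm ℕ) {a b : ℕ} (hab : a ≤ b) :
    (Rset e w a b).Finite := (Alv_finite e w a).subset (Rset_subset_Alv hab)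

lemma Rset_mono_right {e : ℕ → ℕ} {w : ℕ → Equiv.Perm ℕ} {a b b' : ℕ} (h : b' ≤ b) :
    Rset e w a b ⊆ Rset e w a b' := fun x hx k hk1 hk2 => hx k hk1 (hk2.trans h)

lemma Rset_mono_left {e : ℕ → ℕ} {w : ℕ → Equiv.Perm ℕ} {a a' b : ℕ} (h : a ≤ a') :
    Rset e w a b ⊆ Rset e w a' b := fun x hx k hk1 hk2 => hx k (h.trans hk1) hk2

lemma rank_eq_Rset (e : ℕ → ℕ) (w : ℕ → Equiv.Perm ℕ) {a b : ℕ} (hab : a ≤ b) :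
    rank e w a b = (Rset e w a b).ncard := by
  have himg : {p : ℕ | p < e a ∧ ∀ k, a < k → k ≤ b → chain w a k p < e k} =
      (posP w a) '' Rset e w a b := by
    ext p
    constructor
    · rintro ⟨h1, h2⟩
      refine ⟨(posP w a)⁻¹ p, fun k hk1 hk2 => ?_, by simp⟩
      rcases eq_or_lt_of_le hk1 with heq | hlt
      · subst heq; simpa using h1
      · have := h2 k hlt hk2
        rw [← chain_posP w a k (by omega) ((posP w a)⁻¹ p), Equiv.Perm.inv_def, Equiv.apply_symm_apply]
        exact this
    · rintro ⟨x, hx, rfl⟩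
      refine ⟨hx a le_rfl hab, fun k hk1 hk2 => ?_⟩
      rw [chain_posP w a k (by omega)]
      exact hx k (by omega) hk2
  rw [rank, himg, Set.ncard_image_of_injective _ (posP w a).injective]

/-- Strands alive on `[i, j-1]` and dead at `j`. -/
def DieSet (e : ℕ → ℕ) (w : ℕ → Equiv.Perm ℕ) (i j : ℕ) : Set ℕ :=
  Rset e w i (j - 1) \ Rset e w i j

/-- Strands alive on `[i+1, j]` and dead at `i`. -/
def BornSet (e : ℕ → ℕ) (w : ℕ → Equiv.Perm ℕ) (i j : ℕ) : Set ℕ :=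
  Rset e w (i + 1) j \ Rset e w i j

lemma DieSet_finite (e : ℕ → ℕ) (w : ℕ → Equiv.Perm ℕ) {i j : ℕ} (hij : i < j) :
    (DieSet e w i j).Finite :=
  (Rset_finite e w (show i ≤ j - 1 by omega)).subset Set.diff_subset

lemma BornSet_finite (e : ℕ → ℕ) (w : ℕ → Equiv.Perm ℕ) {i j : ℕ} (hij : i < j) :
    (BornSet e w i j).Finite :=
  (Rset_finite e w (show i + 1 ≤ j by omega)).subset Set.diff_subset

lemma DieSet_dead {e : ℕ → ℕ} {w : ℕ → Equiv.Perm ℕ} {i j x : ℕ} (hij : i < j)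
    (hx : x ∈ DieSet e w i j) : e j ≤ posP w j x := by
  by_contra h
  push_neg at h
  refine hx.2 (fun k hk1 hk2 => ?_)
  rcases eq_or_lt_of_le hk2 with rfl | hlt
  · exact h
  · exact hx.1 k hk1 (by omega)

lemma BornSet_dead {e : ℕ → ℕ} {w : ℕ → Equiv.Perm ℕ} {i j x : ℕ} (hij : i < j)
    (hx : x ∈ BornSet e w i j) : e i ≤ posP w i x := by
  by_contra h
  push_neg at h
  refine hx.2 (fun k hk1 hk2 => ?_)
  rcases eq_or_lt_of_le hk1 with rfl | hlt
  · exact h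
  · exact hx.1 k (by omega) hk2

/-- The crossing set of a quadruple. -/
def Kset (w : ℕ → Equiv.Perm ℕ) (i j s t : ℕ) : Set ℕ :=
  {k | i < k ∧ k ≤ j ∧ posP w k t < posP w k s}

lemma crossing_main {e : ℕ → ℕ} {w : ℕ → Equiv.Perm ℕ} {i j s t : ℕ}
    (hij : i < j) (hs : s ∈ DieSet e w i j) (ht : t ∈ BornSet e w i j) :
    i < sInf (Kset w i j s t) ∧ sInf (Kset w i j s t) ≤ j ∧
      (posP w (sInf (Kset w i j s t)) t, posP w (sInf (Kset w i j s t)) s) ∈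
        InvSet (w (sInf (Kset w i j s t))) := by
  have hsd : e j ≤ posP w j s := DieSet_dead hij hs
  have htd : e i ≤ posP w i t := BornSet_dead hij ht
  have hjK : j ∈ Kset w i j s t := by
    refine ⟨hij, le_rfl, ?_⟩
    have := ht.1 j (by omega) le_rfl
    omega
  have hk := Nat.sInf_mem (⟨j, hjK⟩ : (Kset w i j s t).Nonempty)
  obtain ⟨hk1, hk2, hk3⟩ := hk
  set k := sInf (Kset w i j s t) with hkdef
  have hst : posP w i s < posP w i t := by
    have := hs.1 i le_rfl (by omega)
    omega
  have hprev : posP w (k - 1) s < posP w (k - 1) t := by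
    rcases eq_or_lt_of_le (show i ≤ k - 1 by omega) with heq | hlt
    · rw [← heq]; exact hst
    · have hnot : k - 1 ∉ Kset w i j s t := Nat.notMem_of_lt_sInf (by omega)
      have h1 : ¬ posP w (k - 1) t < posP w (k - 1) s := fun hc =>
        hnot ⟨hlt, by omega, hc⟩
      have h2 : posP w (k - 1) s ≠ posP w (k - 1) t := by
        intro hc
        have hst' : s = t := (posP w (k - 1)).injective hc
        rw [hst'] at hst
        omega
      omega
  refine ⟨hk1, hk2, hk3, ?_⟩
  have hk0 : k - 1 + 1 = k := by omega
  have hws : w k (posP w k s) = posP w (k - 1) s := by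
    conv_lhs => rw [← hk0]
    rw [posP_succ, Equiv.Perm.inv_def, Equiv.apply_symm_apply]
  have hwt : w k (posP w k t) = posP w (k - 1) t := by
    conv_lhs => rw [← hk0]
    rw [posP_succ, Equiv.Perm.inv_def, Equiv.apply_symm_apply]
  show w k (posP w k s) < w k (posP w k t)
  rw [hws, hwt]
  exact hprev

lemma length_lower_bound (n : ℕ) (e : ℕ → ℕ) (w : ℕ → Equiv.Perm ℕ)
    (hfs : ∀ k, 1 ≤ k → k ≤ n → FinSupp (w k)) :
    codim n (rank e w) ≤ diagLength n w := by
  classical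
  set Ef : Finset (ℕ × ℕ × ℕ) := (Finset.Icc 1 n).biUnion (fun k =>
    if h : 1 ≤ k ∧ k ≤ n then
      ((invset_finite (hfs k h.1 h.2)).toFinset).image (fun p => (k, p.1, p.2))
    else ∅) with hEf
  set Df : Finset ((ℕ × ℕ) × ℕ × ℕ) :=
    (Finset.range (n + 1) ×ˢ Finset.range (n + 1)).biUnion (fun ij =>
      if h : ij.1 < ij.2 then
        (((DieSet_finite e w h).toFinset) ×ˢ ((BornSet_finite e w h).toFinset)).image
          (fun st => ((ij.1, ij.2), st))
      else ∅) with hDf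
  have hDmem : ∀ i j s t, ((i, j), (s, t)) ∈ Df ↔
      i < j ∧ j ≤ n ∧ s ∈ DieSet e w i j ∧ t ∈ BornSet e w i j := by
    intro i j s t
    simp only [hDf, Finset.mem_biUnion, Finset.mem_product, Finset.mem_range]
    constructor
    · rintro ⟨⟨i', j'⟩, ⟨hi', hj'⟩, hmem⟩
      split_ifs at hmem with h
      · obtain ⟨st', hst', heq⟩ := Finset.mem_image.1 hmem
        have h1 := congrArg Prod.fst heq
        have hii : i' = i := congrArg Prod.fst h1
        have hjj : j' = j := congrArg Prod.snd h1
        subst hii; subst hjj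
        rw [Finset.mem_product, Set.Finite.mem_toFinset, Set.Finite.mem_toFinset] at hst'
        have hst2 : st' = (s, t) := congrArg Prod.snd heq
        rw [hst2] at hst'
        exact ⟨h, by omega, hst'.1, hst'.2⟩
      · simp at hmem
    · rintro ⟨h1, h2, h3, h4⟩
      refine ⟨(i, j), ⟨by omega, by omega⟩, ?_⟩
      rw [dif_pos h1]
      refine Finset.mem_image.2 ⟨(s, t), ?_, rfl⟩
      rw [Finset.mem_product, Set.Finite.mem_toFinset, Set.Finite.mem_toFinset]
      exact ⟨h3, h4⟩
  have hDcard : Df.card = codim n (rank e w) := by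
    rw [hDf, Finset.card_biUnion]
    · rw [codim, Finset.sum_product]
      refine Finset.sum_congr rfl (fun i hi => Finset.sum_congr rfl (fun j hj => ?_))
      rw [Finset.mem_range] at hi hj
      by_cases hij : i < j
      · rw [dif_pos hij, if_pos hij]
        rw [Finset.card_image_of_injective _
          (fun a b hab => by simpa using (Prod.mk.injEq .. ▸ hab).2)]
        rw [Finset.card_product]
        have hA : ((DieSet_finite e w hij).toFinset).card =
            rank e w i (j - 1) - rank e w i j := by
          rw [← Set.ncard_eq_toFinset_card _ (DieSet_finite e w hij), DieSet,
            Set.ncard_diff (Rset_mono_right (by omega)) (Rset_finite e w (by omega)),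
            rank_eq_Rset e w (show i ≤ j - 1 by omega), rank_eq_Rset e w (le_of_lt hij)]
        have hB : ((BornSet_finite e w hij).toFinset).card =
            rank e w (i + 1) j - rank e w i j := by
          rw [← Set.ncard_eq_toFinset_card _ (BornSet_finite e w hij), BornSet,
            Set.ncard_diff (Rset_mono_left (by omega)) (Rset_finite e w (le_of_lt hij)),
            rank_eq_Rset e w (show i + 1 ≤ j by omega), rank_eq_Rset e w (le_of_lt hij)]
        rw [hA, hB]
      · rw [dif_neg hij, if_neg hij, Finset.card_empty]
    · intro x hx y hy hxy
      rw [Function.onFun, Finset.disjoint_left]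
      intro a ha hb
      apply hxy
      split_ifs at ha with h1
      · split_ifs at hb with h2
        · obtain ⟨st1, _, heq1⟩ := Finset.mem_image.1 ha
          obtain ⟨st2, _, heq2⟩ := Finset.mem_image.1 hb
          have : (x.1, x.2) = (y.1, y.2) := by
            have e1 : a.1 = (x.1, x.2) := by rw [← heq1]
            have e2 : a.1 = (y.1, y.2) := by rw [← heq2]
            rw [e1] at e2
            exact e2
          calc x = (x.1, x.2) := rfl
          _ = (y.1, y.2) := this
          _ = y := rfl
        · simp at hb
      · simp at ha
  have hEcard : Ef.card = diagLength n w := by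
    rw [hEf, Finset.card_biUnion]
    · rw [diagLength]
      refine Finset.sum_congr rfl (fun k hk => ?_)
      rw [Finset.mem_Icc] at hk
      rw [dif_pos hk]
      rw [Finset.card_image_of_injective _
        (fun a b hab => by
          have h2 := (Prod.mk.injEq .. ▸ hab).2
          exact Prod.ext (congrArg Prod.fst h2) (congrArg Prod.snd h2))]
      rw [← Set.ncard_eq_toFinset_card _ (invset_finite (hfs k hk.1 hk.2)), ell_eq]
    · intro x hx y hy hxy
      rw [Function.onFun, Finset.disjoint_left]
      intro a ha hb
      apply hxy
      split_ifs at ha with h1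
      · split_ifs at hb with h2
        · obtain ⟨p1, _, heq1⟩ := Finset.mem_image.1 ha
          obtain ⟨p2, _, heq2⟩ := Finset.mem_image.1 hb
          have e1 : a.1 = x := by rw [← heq1]
          have e2 : a.1 = y := by rw [← heq2]
          rw [e1] at e2
          exact e2
        · simp at hb
      · simp at ha
  set Φ : (ℕ × ℕ) × ℕ × ℕ → ℕ × ℕ × ℕ := fun q =>
    (sInf (Kset w q.1.1 q.1.2 q.2.1 q.2.2),
      posP w (sInf (Kset w q.1.1 q.1.2 q.2.1 q.2.2)) q.2.2,
      posP w (sInf (Kset w q.1.1 q.1.2 q.2.1 q.2.2)) q.2.1) with hΦ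
  have hmaps : ∀ x ∈ Df, Φ x ∈ Ef := by
    rintro ⟨⟨i, j⟩, s, t⟩ hx
    rw [hDmem] at hx
    obtain ⟨hij, hjn, hs, ht⟩ := hx
    obtain ⟨hk1, hk2, hkinv⟩ := crossing_main hij hs ht
    rw [hEf]
    apply Finset.mem_biUnion.2
    refine ⟨sInf (Kset w i j s t), Finset.mem_Icc.2 ⟨by omega, by omega⟩, ?_⟩
    rw [dif_pos ⟨by omega, by omega⟩]
    exact Finset.mem_image.2 ⟨(posP w (sInf (Kset w i j s t)) t,
      posP w (sInf (Kset w i j s t)) s), (Set.Finite.mem_toFinset _).2 hkinv, rfl⟩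
  have hinj : Set.InjOn Φ ↑Df := by
    rintro ⟨⟨i, j⟩, s, t⟩ hx ⟨⟨i', j'⟩, s', t'⟩ hy heq
    rw [Finset.mem_coe, hDmem] at hx hy
    obtain ⟨hij, hjn, hs, ht⟩ := hx
    obtain ⟨hij', hjn', hs', ht'⟩ := hy
    obtain ⟨hk1, hk2, _⟩ := crossing_main hij hs ht
    obtain ⟨hk1', hk2', _⟩ := crossing_main hij' hs' ht'
    simp only [hΦ, Prod.mk.injEq] at heq
    obtain ⟨ek, et, es⟩ := heq
    rw [← ek] at et es hk1' hk2'
    set k := sInf (Kset w i j s t) with hkdef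
    have htt : t = t' := (posP w k).injective et
    have hss : s = s' := (posP w k).injective es
    subst htt; subst hss
    have hii : i = i' := by
      rcases lt_trichotomy i i' with h | h | h
      · exfalso
        have htd' : e i' ≤ posP w i' t := BornSet_dead hij' ht'
        rcases le_or_gt i' j with hle | hgt
        · have := ht.1 i' (by omega) hle
          omega
        · omega
      · exact h
      · exfalso
        have htd : e i ≤ posP w i t := BornSet_dead hij ht
        rcases le_or_gt i j' with hle | hgt
        · have := ht'.1 i (by omega) hle
          omega
        · omega
    subst hii
    have hjj : j = j' := by
      rcases lt_trichotomy j j' with h | h | h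
      · exfalso
        have := hs'.1 j (by omega) (by omega)
        have := DieSet_dead hij hs
        omega
      · exact h
      · exfalso
        have := hs.1 j' (by omega) (by omega)
        have := DieSet_dead hij' hs'
        omega
    subst hjj
    rfl
  calc codim n (rank e w) = Df.card := hDcard.symm
  _ ≤ Ef.card := Finset.card_le_card_of_injOn Φ hmaps hinj
  _ = diagLength n w := hEcard


lemma posP_succ' (w : ℕ → Equiv.Perm ℕ) (k : ℕ) :
    posP w (k + 1) = (w (k + 1))⁻¹ * posP w k := rfl

/-- in a minimal lace diagram, for `1 ≤ i ≤ n-1` and `1 ≤ j < e i`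
(0-indexed: `j + 1 < e i`), it is impossible that both `w i` has a descent at `j`
and `(w (i+1))⁻¹` has a descent at `j`. -/
theorem minimal_no_double_descent (n : ℕ) (hn : 1 ≤ n) (e : ℕ → ℕ)
    (w : ℕ → Equiv.Perm ℕ) (hw : IsMinimal n e w) (i j : ℕ)
    (hi1 : 1 ≤ i) (hi2 : i + 1 ≤ n) (hj : j + 1 < e i) :
    ¬(w i (j + 1) < w i j ∧ (w (i + 1))⁻¹ (j + 1) < (w (i + 1))⁻¹ j) := by
  rintro ⟨hd1, hd2⟩
  obtain ⟨⟨hnorm, hdat⟩, hmin⟩ := hw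
  have hfsi : FinSupp (w i) := (hdat i hi1 (by omega)).1
  have hfsi1 : FinSupp (w (i + 1)) := (hdat (i + 1) (by omega) hi2).1
  set s : Equiv.Perm ℕ := Equiv.swap j (j + 1) with hs
  have hsinv : s⁻¹ = s := by rw [hs]; exact Equiv.swap_inv j (j + 1)
  have hss : s * s = 1 := by rw [hs]; exact Equiv.swap_mul_self j (j + 1)
  set w' : ℕ → Equiv.Perm ℕ := fun k =>
    if k = i then w i * s else if k = i + 1 then s * w (i + 1) else w k with hw'
  have hw'i : w' i = w i * s := by simp [hw']
  have hw'i1 : w' (i + 1) = s * w (i + 1) := by simp [hw']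
  have hw'k : ∀ k, k ≠ i → k ≠ i + 1 → w' k = w k := by
    intro k h1 h2
    simp [hw', h1, h2]
  have key : ∀ k, posP w' k = if k = i then s * posP w k else posP w k := by
    intro k
    induction k with
    | zero => rw [if_neg (by omega)]; rfl
    | succ m ih =>
      by_cases h1 : m + 1 = i
      · have hmi : m ≠ i := by omega
        have hww : w' (m + 1) = w (m + 1) * s := by rw [h1]; exact hw'i
        rw [posP_succ' w', if_pos h1, ih, if_neg hmi, hww, mul_inv_rev, hsinv,
          posP_succ' w, mul_assoc]
      by_cases h2 : m + 1 = i + 1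
      · have hmi : m = i := by omega
        have hww : w' (m + 1) = s * w (m + 1) := by rw [h2]; exact hw'i1
        rw [posP_succ' w', if_neg h1, ih, if_pos hmi, hww, mul_inv_rev, hsinv,
          posP_succ' w, mul_assoc, ← mul_assoc s s, hss, one_mul]
      · have hmi : m ≠ i := by omega
        rw [posP_succ' w', if_neg h1, ih, if_neg hmi, hw'k _ h1 h2, posP_succ' w]
  have hswapE : ∀ x, (s x < e i ↔ x < e i) := by
    intro x
    rw [hs]
    simp only [Equiv.swap_apply_def]
    split_ifs <;> omega
  have hposlt : ∀ k x, (posP w' k x < e k ↔ posP w k x < e k) := by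
    intro k x
    rcases eq_or_ne k i with rfl | h
    · rw [key, if_pos rfl, Equiv.Perm.mul_apply]
      exact hswapE _
    · rw [key, if_neg h]
  have hR : ∀ a b, Rset e w' a b = Rset e w a b := by
    intro a b
    ext x
    simp only [Rset, Set.mem_setOf_eq]
    constructor <;> intro h k h1 h2
    · exact (hposlt k x).1 (h k h1 h2)
    · exact (hposlt k x).2 (h k h1 h2)
  have hrank : ∀ a b, a ≤ b → rank e w' a b = rank e w a b := by
    intro a b hab
    rw [rank_eq_Rset e w' hab, rank_eq_Rset e w hab, hR]
  have hcodim : codim n (rank e w') = codim n (rank e w) := by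
    rw [codim, codim]
    refine Finset.sum_congr rfl fun a _ => Finset.sum_congr rfl fun b _ => ?_
    by_cases hab : a < b
    · rw [if_pos hab, if_pos hab, hrank a (b - 1) (by omega), hrank a b (by omega),
        hrank (a + 1) b (by omega)]
    · rw [if_neg hab, if_neg hab]
  have hiIcc : i ∈ Finset.Icc 1 n := Finset.mem_Icc.2 ⟨hi1, by omega⟩
  have hi1Icc : i + 1 ∈ (Finset.Icc 1 n).erase i :=
    Finset.mem_erase.2 ⟨by omega, Finset.mem_Icc.2 ⟨by omega, hi2⟩⟩
  have hsum : ∀ v : ℕ → Equiv.Perm ℕ, (∑ k ∈ Finset.Icc 1 n, ell (v k)) =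
      ell (v i) + (ell (v (i + 1)) +
        ∑ k ∈ ((Finset.Icc 1 n).erase i).erase (i + 1), ell (v k)) := by
    intro v
    rw [← Finset.add_sum_erase _ _ hiIcc, ← Finset.add_sum_erase _ _ hi1Icc]
  have hrest : ∑ k ∈ ((Finset.Icc 1 n).erase i).erase (i + 1), ell (w' k) =
      ∑ k ∈ ((Finset.Icc 1 n).erase i).erase (i + 1), ell (w k) := by
    refine Finset.sum_congr rfl fun k hk => ?_
    rw [Finset.mem_erase, Finset.mem_erase] at hk
    rw [hw'k k hk.2.1 hk.1]
  have he1 : ell (w' i) + 1 = ell (w i) := by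
    rw [hw'i]; exact ell_descent_right hfsi hd1
  have he2 : ell (w' (i + 1)) + 1 = ell (w (i + 1)) := by
    rw [hw'i1]; exact ell_descent_left hfsi1 hd2
  have hL : diagLength n w' + 2 = diagLength n w := by
    rw [diagLength, diagLength, hsum w, hsum w', hrest]
    omega
  have hfs' : ∀ k, 1 ≤ k → k ≤ n → FinSupp (w' k) := by
    intro k h1 h2
    rcases eq_or_ne k i with rfl | hki
    · rw [hw'i]; exact finsupp_mul hfsi (finsupp_swap _ _)
    rcases eq_or_ne k (i + 1) with rfl | hki1
    · rw [hw'i1]; exact finsupp_mul (finsupp_swap _ _) hfsi1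
    · rw [hw'k k hki hki1]; exact (hdat k h1 h2).1
  have hlb := length_lower_bound n e w' hfs'
  rw [hcodim, ← hmin] at hlb
  omega
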